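/- Let n be a natural number with n > 1. Then the integer sum ∑_{d ∣ n} μ(n/d)·(2^d − d − 1), taken over the positive divisors d of n, is strictly positive. (Equivalently, for any k the product ∏_{d∣n} (k^{2^d−d−1})^{μ(n/d)} is a positive power of k.) -/

import Mathlib

open ArithmeticFunction ArithmeticFunction.Moebius in
theorem moebius_sum_two_pow_sub_d_sub_one_pos (n : ℕ) (hn : 1 < n) :
    0 < ∑ d ∈ n.divisors, (μ (n / d) : ℤ) * ((2 : ℤ) ^ d - d - 1) := by
  have hn0 : n ≠ 0 := by omega
  set m := n / 2 with hm
  -- f d ≥ 0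
  have hf0 : ∀ d : ℕ, 0 ≤ (2 : ℤ) ^ d - d - 1 := by
    intro d
    have := Nat.lt_two_pow_self (n := d)
    have : (d : ℤ) < 2 ^ d := by exact_mod_cast this
    omega
  have hmem : n ∈ n.divisors := Nat.mem_divisors_self n hn0
  rw [← Finset.add_sum_erase _ _ hmem]
  have hmu1 : (μ (n / n) : ℤ) = 1 := by
    rw [Nat.div_self (by omega)]; simp
  rw [hmu1, one_mul]
  -- each term on erased set is ≥ -(2^d - d - 1)
  have hterm : ∀ d ∈ (n.divisors).erase n,
      -((2 : ℤ) ^ d - d - 1) ≤ (μ (n / d) : ℤ) * ((2 : ℤ) ^ d - d - 1) := by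
    intro d _
    have h1 : -1 ≤ (μ (n / d) : ℤ) :=
      (abs_le.mp ArithmeticFunction.abs_moebius_le_one).1
    nlinarith [hf0 d]
  have hsum1 : -(∑ d ∈ (n.divisors).erase n, ((2 : ℤ) ^ d - d - 1)) ≤
      ∑ d ∈ (n.divisors).erase n, (μ (n / d) : ℤ) * ((2 : ℤ) ^ d - d - 1) := by
    rw [← Finset.sum_neg_distrib]
    exact Finset.sum_le_sum hterm
  -- erased divisors lie in Icc 1 m
  have hsub : (n.divisors).erase n ⊆ Finset.Icc 1 m := by
    intro d hd
    rcases Finset.mem_erase.mp hd with ⟨hdn, hdv⟩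
    rcases Nat.mem_divisors.mp hdv with ⟨hdvd, _⟩
    have hd1 : 1 ≤ d := Nat.pos_of_dvd_of_pos hdvd (by omega)
    have hlt : d < n := lt_of_le_of_ne (Nat.le_of_dvd (by omega) hdvd) hdn
    obtain ⟨c, hc⟩ := hdvd
    have hc2 : 2 ≤ c := by
      rcases Nat.lt_or_ge c 2 with h | h
      · interval_cases c <;> omega
      · exact h
    have : d ≤ m := by
      rw [hm]
      refine Nat.le_div_iff_mul_le (by omega) |>.mpr ?_
      calc d * 2 ≤ d * c := Nat.mul_le_mul_left d hc2
        _ = n := hc.symm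
    exact Finset.mem_Icc.mpr ⟨hd1, this⟩
  have hsum2 : ∑ d ∈ (n.divisors).erase n, ((2 : ℤ) ^ d - d - 1) ≤
      ∑ d ∈ Finset.Icc 1 m, ((2 : ℤ) ^ d - d - 1) :=
    Finset.sum_le_sum_of_subset_of_nonneg hsub (fun d _ _ => hf0 d)
  -- bound the Icc sum
  have hsum3 : ∑ d ∈ Finset.Icc 1 m, ((2 : ℤ) ^ d - d - 1) ≤
      ∑ d ∈ Finset.Icc 1 m, ((2 : ℤ) ^ d - 2) := by
    refine Finset.sum_le_sum fun d hd => ?_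
    have := (Finset.mem_Icc.mp hd).1
    have : (1 : ℤ) ≤ d := by exact_mod_cast this
    omega
  have hgeom : ∑ d ∈ Finset.Icc 1 m, ((2 : ℤ) ^ d - 2) = 2 ^ (m + 1) - 2 - 2 * m := by
    rw [Finset.sum_sub_distrib, Finset.sum_const, Nat.card_Icc]
    have h1 : ∑ d ∈ Finset.Icc 1 m, (2 : ℤ) ^ d = 2 ^ (m + 1) - 2 := by
      induction m with
      | zero => simp
      | succ k ih =>
        rw [Finset.sum_Icc_succ_top (by omega), ih]
        ring
    rw [h1]
    simp
    ring
  -- key arithmetic inequality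
  have hmn : m + 1 ≤ n := by omega
  have hkey : (2 : ℤ) ^ (m + 1) + n < 2 ^ n + 2 * m + 1 := by
    rcases Nat.even_or_odd n with he | ho
    · have h2m : 2 * m = n := by
        obtain ⟨k, hk⟩ := he; omega
      have : (2 : ℤ) ^ (m + 1) ≤ 2 ^ n := pow_le_pow_right₀ (by norm_num) hmn
      omega
    · have h2m : 2 * m + 1 = n := by
        obtain ⟨k, hk⟩ := ho; omega
      have hlt : m + 1 < n := by omega
      have : (2 : ℤ) ^ (m + 1) < 2 ^ n := pow_lt_pow_right₀ (by norm_num) hlt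
      omega
  have hpown : ((2 : ℤ) ^ n - n - 1) - (2 ^ (m + 1) - 2 - 2 * m) > 0 := by omega
  calc (0 : ℤ) < ((2 : ℤ) ^ n - n - 1) - (2 ^ (m + 1) - 2 - 2 * m) := hpown
    _ ≤ ((2 : ℤ) ^ n - n - 1) +
        ∑ d ∈ (n.divisors).erase n, (μ (n / d) : ℤ) * ((2 : ℤ) ^ d - d - 1) := by
      have := le_trans hsum2 (le_trans hsum3 (le_of_eq hgeom))
      linarith [le_trans (neg_le_neg this) hsum1]
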